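/- For every real q, ∫_{−ln 2}^{∞} [1 − e^{2y} + (q(e^y − 1) − (q − 2)(e^{3y} − e^{2y}))·1_{y < ln 2}]·e^{−y}/(e^y − 1)² dy = 2 + 2·ln 2 − q·(2·ln 2 + 3/2). -/

import Mathlib

open MeasureTheory Set Filter

theorem stmt_9 (q : ℝ) :
    ∫ y in Set.Ioi (-Real.log 2),
      (1 - Real.exp (2 * y)
          + (q * (Real.exp y - 1) - (q - 2) * (Real.exp (3 * y) - Real.exp (2 * y)))
            * (if y < Real.log 2 then (1 : ℝ) else 0))
        * Real.exp (-y) / (Real.exp y - 1) ^ 2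
      = 2 + 2 * Real.log 2 - q * (2 * Real.log 2 + 3/2) := by
  have hl2 : 0 < Real.log 2 := Real.log_pos (by norm_num)
  have hexplog : Real.exp (Real.log 2) = 2 := Real.exp_log (by norm_num)
  set a := -Real.log 2 with ha
  set b := Real.log 2 with hb
  have hab : a < b := by rw [ha, hb]; linarith
  set F : ℝ → ℝ := fun y =>
      (1 - Real.exp (2 * y)
          + (q * (Real.exp y - 1) - (q - 2) * (Real.exp (3 * y) - Real.exp (2 * y)))
            * (if y < Real.log 2 then (1 : ℝ) else 0))
        * Real.exp (-y) / (Real.exp y - 1) ^ 2 with hF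
  set g₁ : ℝ → ℝ := fun y => (2 - q) + (1 - q) * Real.exp (-y) with hg₁
  set g₂ : ℝ → ℝ := fun y => Real.exp (-y) - 2 / (Real.exp y - 1) with hg₂
  -- F = g₁ a.e. on Ioo a b
  have hcong₁ : F =ᶠ[ae (volume.restrict (Ioo a b))] g₁ := by
    have h0 : ∀ᵐ y : ℝ ∂volume, y ≠ 0 := by
      rw [MeasureTheory.ae_iff]
      simpa using Real.volume_singleton (a := 0)
    filter_upwards [ae_restrict_mem measurableSet_Ioo, ae_restrict_of_ae h0] with y hy hy0
    have hlt : y < Real.log 2 := hy.2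
    have hu0 : Real.exp y ≠ 0 := (Real.exp_pos y).ne'
    have hu1 : Real.exp y - 1 ≠ 0 := by
      intro h
      exact hy0 ((Real.exp_eq_one_iff (x := y)).mp (by linarith))
    have h2 : Real.exp (2 * y) = Real.exp y ^ 2 := by
      rw [two_mul, Real.exp_add]; ring
    have h3 : Real.exp (3 * y) = Real.exp y ^ 3 := by
      have h : (3:ℝ) * y = y + (y + y) := by ring
      rw [h, Real.exp_add, Real.exp_add]; ring
    have hneg : Real.exp (-y) = (Real.exp y)⁻¹ := Real.exp_neg y
    simp only [hF, hg₁, if_pos hlt, h2, h3, hneg, mul_one]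
    field_simp
    ring
  -- F = g₂ on Ici b
  have hcong₂ : ∀ y ∈ Ici b, F y = g₂ y := by
    intro y hy
    have hyb : b ≤ y := hy
    have hy0 : 0 < y := lt_of_lt_of_le hl2 hyb
    have hu1 : 1 < Real.exp y := (Real.one_lt_exp_iff (x := y)).mpr hy0
    have hu1' : Real.exp y - 1 ≠ 0 := by linarith
    have hu0 : Real.exp y ≠ 0 := (Real.exp_pos y).ne'
    have hlt : ¬ y < Real.log 2 := not_lt.mpr hyb
    have h2 : Real.exp (2 * y) = Real.exp y ^ 2 := by
      rw [two_mul, Real.exp_add]; ring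
    have hneg : Real.exp (-y) = (Real.exp y)⁻¹ := Real.exp_neg y
    simp only [hF, hg₂, if_neg hlt, mul_zero, add_zero, h2, hneg]
    field_simp
    ring
  have hcong₂ae : F =ᶠ[ae (volume.restrict (Ici b))] g₂ := by
    filter_upwards [ae_restrict_mem measurableSet_Ici] with y hy
    exact hcong₂ y hy
  -- integrability of g₂ on Ioi b
  have hint₂ : IntegrableOn g₂ (Ioi b) := by
    have hbase : IntegrableOn (fun y => Real.exp (-1 * y)) (Ioi b) :=
      exp_neg_integrableOn_Ioi b one_pos
    have hmeas : AEStronglyMeasurable g₂ (volume.restrict (Ioi b)) := by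
      apply ContinuousOn.aestronglyMeasurable _ measurableSet_Ioi
      apply ContinuousOn.sub (Real.continuous_exp.comp continuous_neg).continuousOn
      apply ContinuousOn.div continuousOn_const
        (Real.continuous_exp.continuousOn.sub continuousOn_const)
      intro y hy
      have hy0 : 0 < y := lt_trans hl2 hy
      have := (Real.one_lt_exp_iff (x := y)).mpr hy0
      intro h; have h' : Real.exp y - 1 = 0 := h; linarith
    refine Integrable.mono' (hbase.const_mul 5) hmeas ?_
    filter_upwards [ae_restrict_mem measurableSet_Ioi] with y hy
    have hyb : b < y := hy
    have hexpb : (2:ℝ) ≤ Real.exp y := by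
      calc (2:ℝ) = Real.exp b := hexplog.symm
      _ ≤ Real.exp y := Real.exp_le_exp.mpr hyb.le
    have hpos : 0 < Real.exp y - 1 := by linarith
    have hme : Real.exp (-y) * Real.exp y = 1 := by
      rw [← Real.exp_add]; simp
    have hpos2 : 0 < Real.exp (-y) := Real.exp_pos _
    have h12 : Real.exp (-y) ≤ 1/2 := by nlinarith
    have hkey : 2 / (Real.exp y - 1) ≤ 4 * Real.exp (-y) := by
      rw [div_le_iff₀ hpos]
      nlinarith
    have h2 : 0 < 2 / (Real.exp y - 1) := by positivity
    simp only [neg_one_mul]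
    rw [Real.norm_eq_abs, abs_le, hg₂]
    constructor <;> simp only <;> nlinarith
  have hint₂' : IntegrableOn g₂ (Ici b) := by
    rwa [integrableOn_Ici_iff_integrableOn_Ioi]
  have hg₁cont : Continuous g₁ :=
    continuous_const.add (continuous_const.mul (Real.continuous_exp.comp continuous_neg))
  have hintF₁ : IntegrableOn F (Ioo a b) := by
    have h : IntegrableOn g₁ (Ioo a b) :=
      (hg₁cont.integrableOn_Ioc).mono_set Set.Ioo_subset_Ioc_self
    exact h.congr_fun_ae hcong₁.symm
  have hintF₂ : IntegrableOn F (Ici b) := hint₂'.congr_fun_ae hcong₂ae.symm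
  -- split the integral
  have hdisj : Disjoint (Ioo a b) (Ici b) :=
    Set.disjoint_left.mpr fun x hx hx' => absurd hx' (not_le.mpr hx.2)
  have hsplit : ∫ y in Ioi a, F y = (∫ y in Ioo a b, F y) + ∫ y in Ici b, F y := by
    rw [← Set.Ioo_union_Ici_eq_Ioi hab]
    exact setIntegral_union hdisj measurableSet_Ici hintF₁ hintF₂
  -- first integral
  have hI₁ : ∫ y in Ioo a b, F y = (2 - q) * (2 * Real.log 2) + (1 - q) * (3/2) := by
    rw [integral_congr_ae hcong₁]
    have hIoo : ∫ y in Ioo a b, g₁ y = ∫ y in a..b, g₁ y := by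
      rw [intervalIntegral.integral_of_le hab.le, integral_Ioc_eq_integral_Ioo]
    rw [hIoo]
    have hderiv : ∀ y ∈ Set.uIcc a b,
        HasDerivAt (fun y => (2 - q) * y - (1 - q) * Real.exp (-y)) (g₁ y) y := by
      intro y _
      have h1 : HasDerivAt (fun y : ℝ => (2 - q) * y) (2 - q) y := by
        simpa using (hasDerivAt_id y).const_mul (2 - q)
      have h2 : HasDerivAt (fun y : ℝ => Real.exp (-y)) (-Real.exp (-y)) y := by
        exact (hasDerivAt_neg y).exp.congr_deriv (by ring)
      have h := h1.sub (h2.const_mul (1 - q))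
      refine h.congr_deriv (Eq.symm ?_)
      rw [hg₁]; ring
    rw [intervalIntegral.integral_eq_sub_of_hasDerivAt hderiv (hg₁cont.intervalIntegrable a b)]
    have e1 : Real.exp (-b) = 1/2 := by rw [hb, Real.exp_neg, hexplog]; norm_num
    have e2 : Real.exp (-a) = 2 := by rw [ha, neg_neg, hexplog]
    rw [e1, e2, ha, hb]
    ring
  -- second integral
  have hI₂ : ∫ y in Ici b, F y = 1/2 - 2 * Real.log 2 := by
    rw [setIntegral_congr_fun measurableSet_Ici hcong₂, integral_Ici_eq_integral_Ioi]
    set G : ℝ → ℝ := fun y => -Real.exp (-y) - 2 * Real.log (1 - Real.exp (-y)) with hG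
    have hderiv : ∀ y ∈ Ioi b, HasDerivAt G (g₂ y) y := by
      intro y hy
      have hy0 : 0 < y := lt_trans hl2 hy
      have hey : 0 < Real.exp y := Real.exp_pos y
      have hey1 : 1 < Real.exp y := (Real.one_lt_exp_iff (x := y)).mpr hy0
      have hlt1 : Real.exp (-y) < 1 := Real.exp_lt_one_iff.mpr (by linarith)
      have hne : 1 - Real.exp (-y) ≠ 0 := by linarith
      have hexp : HasDerivAt (fun y : ℝ => Real.exp (-y)) (-Real.exp (-y)) y := by
        exact (hasDerivAt_neg y).exp.congr_deriv (by ring)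
      have h1 : HasDerivAt (fun y : ℝ => 1 - Real.exp (-y)) (Real.exp (-y)) y := by
        exact ((hasDerivAt_const y (1:ℝ)).sub hexp).congr_deriv (by ring)
      have h2 : HasDerivAt (fun y : ℝ => Real.log (1 - Real.exp (-y)))
          (Real.exp (-y) / (1 - Real.exp (-y))) y := h1.log hne
      have h := (hexp.neg).sub (h2.const_mul 2)
      refine h.congr_deriv (Eq.symm ?_)
      rw [hg₂]
      simp only [Real.exp_neg]
      have h1' : (Real.exp y - 1) ≠ 0 := by linarith
      have h2' : (1 : ℝ) - (Real.exp y)⁻¹ ≠ 0 := by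
        rw [Real.exp_neg] at hne; exact hne
      field_simp
    have hcont : ContinuousWithinAt G (Ici b) b := by
      have hne : 1 - Real.exp (-b) ≠ 0 := by
        have : Real.exp (-b) = 1/2 := by rw [hb, Real.exp_neg, hexplog]; norm_num
        rw [this]; norm_num
      have hca : ContinuousAt G b := by
        apply ContinuousAt.sub
        · exact ((Real.continuous_exp.comp continuous_neg).neg).continuousAt
        · have hin : ContinuousAt (fun x : ℝ => 1 - Real.exp (-x)) b :=
            (continuous_const.sub (Real.continuous_exp.comp continuous_neg)).continuousAt
          exact continuousAt_const.mul (hin.log hne)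
      exact hca.continuousWithinAt
    have htend : Tendsto G atTop (nhds 0) := by
      have hexp : Tendsto (fun y : ℝ => Real.exp (-y)) atTop (nhds 0) :=
        Real.tendsto_exp_neg_atTop_nhds_zero
      have h1 : Tendsto (fun y : ℝ => -Real.exp (-y)) atTop (nhds 0) := by
        simpa using hexp.neg
      have h2 : Tendsto (fun y : ℝ => Real.log (1 - Real.exp (-y))) atTop (nhds 0) := by
        have hs : Tendsto (fun y : ℝ => 1 - Real.exp (-y)) atTop (nhds 1) := by
          simpa using (tendsto_const_nhds (x := (1:ℝ))).sub hexp
        have := (Real.continuousAt_log (by norm_num : (1:ℝ) ≠ 0)).tendsto.comp hs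
        rw [Real.log_one] at this; exact this
      have := h1.sub (h2.const_mul 2)
      simpa using this
    rw [MeasureTheory.integral_Ioi_of_hasDerivAt_of_tendsto hcont hderiv hint₂ htend]
    have e1 : Real.exp (-b) = 1/2 := by rw [hb, Real.exp_neg, hexplog]; norm_num
    rw [hG]
    simp only [e1]
    rw [show (1:ℝ) - 1/2 = 2⁻¹ by norm_num, Real.log_inv]
    ring
  rw [hsplit, hI₁, hI₂]
  ring
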